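/- Fix k ∈ I_uf and set F = {k}. Let Θ ⊆ ℤ^I satisfy Θ + f_k ⊆ Θ and d·f_k ∈ Θ for all d ∈ ℕ. Let S = {s_g : g∈Θ} be a Θ-pointed family such that: (i) the factorization property with respect to k holds: x_k · frz_{F,g}(s_g) = frz_{F,g+f_k}(s_{g+f_k}) for all g ∈ Θ; (ii) S has local support under multiplication: for all g₁, g₂ ∈ Θ there is a finite decomposition s_{g₁}·s_{g₂} = Σ_{g∈Θ} b^g·s_g with integer coefficients such that supp s_g ⊆ supp s_{g₁} ∪ supp s_{g₂} whenever b^g ≠ 0; (iii) s_{d·f_k} = x_k^d for all d ∈ ℕ. Then for every g ∈ Θ with k ∉ supp s_g, one has s_{g+f_k} = x_k · s_g. -/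

import Mathlib

/-! Common setup. -/

noncomputable section

namespace CAFreeze

variable {I : Type*} [Fintype I] [DecidableEq I]

/-- The Laurent polynomial ring LP = ℤ[x_i^{±1} : i ∈ I], modeled as the group algebra of
ℤ^I over ℤ. -/
abbrev LP (I : Type*) := AddMonoidAlgebra ℤ (I → ℤ)

/-- The monomial x^m for an exponent vector m ∈ ℤ^I. -/
def mono (m : I → ℤ) : LP I := AddMonoidAlgebra.ofCoeff (Finsupp.single m 1)

/-- The coefficient of the monomial x^m in z ∈ LP. -/
def coeff (z : LP I) (m : I → ℤ) : ℤ := (AddMonoidAlgebra.coeff z : (I → ℤ) →₀ ℤ) m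

variable (Iuf : Finset I) (Bt : I → {i // i ∈ Iuf} → ℤ)

/-- The linear map p* : ℤ^{I_uf} → ℤ^I, p*(n) = B̃·n. -/
def pstar (n : {i // i ∈ Iuf} → ℤ) : I → ℤ := fun i => ∑ kk : {i // i ∈ Iuf}, Bt i kk * n kk

/-- p*(n) for n ∈ ℕ^{I_uf}. -/
def pstarN (n : {i // i ∈ Iuf} → ℕ) : I → ℤ := pstar Iuf Bt fun kk => (n kk : ℤ)

/-- supp n = {k ∈ I_uf : n_k ≠ 0}, as a subset of I. -/
def suppn (n : {i // i ∈ Iuf} → ℕ) : Set I := {i | ∃ h : i ∈ Iuf, n ⟨i, h⟩ ≠ 0}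

/-- LP_{⪯m}: the ℤ-submodule of LP spanned by the monomials x^{m+p*(n)}, n ∈ ℕ^{I_uf}. -/
def LPle (m : I → ℤ) : Submodule ℤ (LP I) :=
  Submodule.span ℤ {z : LP I | ∃ n : {i // i ∈ Iuf} → ℕ, z = mono (m + pstarN Iuf Bt n)}

open Classical in
/-- The freezing operator frz_{F,m}: it keeps the monomials x^{m+p*(n)} with
supp n ∩ F = ∅ and kills the monomials x^{m+p*(n)} with supp n ∩ F ≠ ∅. -/
def frz (F : Finset I) (m : I → ℤ) (z : LP I) : LP I :=
  AddMonoidAlgebra.ofCoeff <| Finsupp.filter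
    (fun e => ∃ n : {i // i ∈ Iuf} → ℕ, e = m + pstarN Iuf Bt n ∧ suppn Iuf n ∩ (F : Set I) = ∅) (AddMonoidAlgebra.coeff z)

/-- z ∈ LP is pointed at g: z = Σ_{n ∈ ℕ^{I_uf}} c_n x^{g+p*(n)} with c_0 = 1. -/
def Pointed (g : I → ℤ) (z : LP I) : Prop :=
  coeff z g = 1 ∧
    ∀ e ∈ (AddMonoidAlgebra.coeff z : (I → ℤ) →₀ ℤ).support, ∃ n : {i // i ∈ Iuf} → ℕ, e = g + pstarN Iuf Bt n

/-- supp z = ∪_{c_n ≠ 0} supp n, for a g-pointed z = Σ_n c_n x^{g+p*(n)}. -/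
def suppz (g : I → ℤ) (z : LP I) : Set I :=
  ⋃ n ∈ {n : {i // i ∈ Iuf} → ℕ | coeff z (g + pstarN Iuf Bt n) ≠ 0}, suppn Iuf n

/-- suppDim z ∈ ℕ^{I_uf}: the coordinatewise maximum of {n : c_n ≠ 0}, for a g-pointed
z = Σ_n c_n x^{g+p*(n)}. -/
def suppDim (g : I → ℤ) (z : LP I) : {i // i ∈ Iuf} → ℕ :=
  fun kk => sSup {d : ℕ | ∃ n : {i // i ∈ Iuf} → ℕ, coeff z (g + pstarN Iuf Bt n) ≠ 0 ∧ n kk = d}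


/-! Auxiliary lemmas. -/

section Aux

variable {Iuf : Finset I} {Bt : I → {i // i ∈ Iuf} → ℤ}

lemma myPstarN_add (n m : {i // i ∈ Iuf} → ℕ) :
    pstarN Iuf Bt (n + m) = pstarN Iuf Bt n + pstarN Iuf Bt m := by
  funext i
  simp [pstarN, pstar, Finset.sum_add_distrib, mul_add]

lemma myPstarN_zero : pstarN Iuf Bt 0 = 0 := by
  funext i; simp [pstarN, pstar]

lemma myPstarN_inj (hfull : Function.Injective (pstar Iuf Bt)) :
    Function.Injective (pstarN Iuf Bt) := by
  intro n m h
  have := hfull h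
  funext kk
  exact Nat.cast_injective (congrFun this kk)

lemma myCoeff_mono_mul (f : I → ℤ) (z : LP I) (e : I → ℤ) :
    coeff (mono f * z) e = coeff z (e - f) := by
  rw [coeff, coeff, mono, AddMonoidAlgebra.ofCoeff_single, AddMonoidAlgebra.coeff_single_mul_apply]
  simp [neg_add_eq_sub]

lemma myCoeff_sum (b : (I → ℤ) →₀ ℤ) (s : (I → ℤ) → LP I) (e : I → ℤ) :
    coeff (b.sum fun g a => a • s g) e = ∑ h ∈ b.support, b h * coeff (s h) e := by
  rw [Finsupp.sum, coeff, AddMonoidAlgebra.coeff_sum, Finsupp.finset_sum_apply]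
  rfl

lemma myMem_suppz {g : I → ℤ} {z : LP I} {n : {i // i ∈ Iuf} → ℕ}
    (h1 : coeff z (g + pstarN Iuf Bt n) ≠ 0) {i : I} (h2 : i ∈ suppn Iuf n) :
    i ∈ suppz Iuf Bt g z :=
  Set.mem_biUnion h1 h2

lemma myFrz_eq_self {k : I} {g : I → ℤ} {z : LP I}
    (hz : ∀ e ∈ (AddMonoidAlgebra.coeff z : (I → ℤ) →₀ ℤ).support, ∃ n, e = g + pstarN Iuf Bt n)
    (hns : k ∉ suppz Iuf Bt g z) :
    frz Iuf Bt {k} g z = z := by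
  classical
  rw [frz, ← AddMonoidAlgebra.coeff_inj, AddMonoidAlgebra.coeff_ofCoeff, Finsupp.filter_eq_self_iff]
  intro e he
  obtain ⟨n, rfl⟩ := hz e (Finsupp.mem_support_iff.2 he)
  refine ⟨n, rfl, ?_⟩
  rw [Set.eq_empty_iff_forall_notMem]
  rintro i ⟨hin, hik⟩
  rw [Finset.coe_singleton, Set.mem_singleton_iff] at hik
  subst hik
  exact hns (myMem_suppz he hin)

end Aux

/-!
STATEMENT 16: Fix k ∈ I_uf and set F = {k}. Let Θ ⊆ ℤ^I satisfy Θ + f_k ⊆ Θ and d·f_k ∈ Θ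
for all d ∈ ℕ. Let S = {s_g : g∈Θ} be a Θ-pointed family such that: (i) the factorization
property with respect to k holds: x_k · frz_{F,g}(s_g) = frz_{F,g+f_k}(s_{g+f_k}) for all
g ∈ Θ; (ii) S has local support under multiplication; (iii) s_{d·f_k} = x_k^d for all
d ∈ ℕ. Then for every g ∈ Θ with k ∉ supp s_g, one has s_{g+f_k} = x_k · s_g.
-/
theorem shift_product_of_local_support (hfull : Function.Injective (pstar Iuf Bt))
    (k : I) (hk : k ∈ Iuf)
    (Θ : Set (I → ℤ)) (hΘ : ∀ g ∈ Θ, g + Pi.single k (1 : ℤ) ∈ Θ)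
    (hΘ' : ∀ d : ℕ, (d • Pi.single k (1 : ℤ) : I → ℤ) ∈ Θ)
    (s : (I → ℤ) → LP I) (hs : ∀ g ∈ Θ, Pointed Iuf Bt g (s g))
    -- (i) the factorization property with respect to k, for F = {k}
    (hfact : ∀ g ∈ Θ, mono (Pi.single k (1 : ℤ)) * frz Iuf Bt {k} g (s g) =
      frz Iuf Bt {k} (g + Pi.single k (1 : ℤ)) (s (g + Pi.single k (1 : ℤ))))
    -- (ii) S has local support under multiplication
    (hmul : ∀ g₁ ∈ Θ, ∀ g₂ ∈ Θ, ∃ b : (I → ℤ) →₀ ℤ, (b.support : Set (I → ℤ)) ⊆ Θ ∧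
      s g₁ * s g₂ = (b.sum fun g a => a • s g) ∧
      ∀ g, b g ≠ 0 →
        suppz Iuf Bt g (s g) ⊆ suppz Iuf Bt g₁ (s g₁) ∪ suppz Iuf Bt g₂ (s g₂))
    -- (iii) s_{d·f_k} = x_k^d for all d ∈ ℕ
    (hxk : ∀ d : ℕ, s (d • Pi.single k (1 : ℤ)) = mono (Pi.single k (1 : ℤ)) ^ d) :
    ∀ g ∈ Θ, k ∉ suppz Iuf Bt g (s g) →
      s (g + Pi.single k (1 : ℤ)) = mono (Pi.single k (1 : ℤ)) * s g := by
  intro g hg hksupp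
  classical
  set fk : I → ℤ := Pi.single k (1 : ℤ) with hfkdef
  have hone : ((1 : ℕ) • Pi.single k (1 : ℤ) : I → ℤ) = fk := one_smul _ _
  have hfkT : fk ∈ Θ := by have := hΘ' 1; rwa [hone] at this
  have hsfk : s fk = mono fk := by
    have h := hxk 1; rwa [pow_one, hone] at h
  have hgfkT : g + fk ∈ Θ := hΘ g hg
  have hpt : ∀ h ∈ Θ, coeff (s h) h = 1 := fun h hh => (hs h hh).1
  have hptsupp : ∀ h ∈ Θ, ∀ e, coeff (s h) e ≠ 0 → ∃ n, e = h + pstarN Iuf Bt n := by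
    intro h hh e hne
    exact (hs h hh).2 e (Finsupp.mem_support_iff.2 hne)
  -- k is not in the support of s fk = mono fk
  have hks_fk : k ∉ suppz Iuf Bt fk (s fk) := by
    intro hmem
    rw [hsfk] at hmem
    obtain ⟨n, hcoeff, hkn⟩ := Set.mem_iUnion₂.1 hmem
    have heq : fk = fk + pstarN Iuf Bt n := by
      by_contra hne
      exact hcoeff (by rw [coeff, mono, AddMonoidAlgebra.coeff_ofCoeff, Finsupp.single_apply, if_neg hne])
    have h0 : pstarN Iuf Bt n = 0 := (left_eq_add.1 heq)
    have hn0 : n = 0 := myPstarN_inj hfull (by rw [h0, myPstarN_zero])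
    obtain ⟨hkI, hnk⟩ := hkn
    exact hnk (by rw [hn0]; rfl)
  obtain ⟨b, hbT, hbeq, hbsub⟩ := hmul g hg fk hfkT
  rw [hsfk, mul_comm (s g) (mono fk)] at hbeq
  have coeffEq : ∀ e, coeff (s g) (e - fk) = ∑ h ∈ b.support, b h * coeff (s h) e := by
    intro e
    rw [← myCoeff_mono_mul, hbeq, myCoeff_sum]
  -- Step A: every h in the support of b lies in g + fk + pstarN(ℕ)
  have stepA : ∀ h ∈ b.support, ∃ m : {i // i ∈ Iuf} → ℕ, h = g + fk + pstarN Iuf Bt m := by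
    have main : ∀ N : ℕ, ∀ h ∈ b.support,
        (b.support.filter (fun h' => h' ≠ h ∧ ∃ n, (h : I → ℤ) = h' + pstarN Iuf Bt n)).card < N →
        ∃ m, (h : I → ℤ) = g + fk + pstarN Iuf Bt m := by
      intro N
      induction N with
      | zero => intro h hh hcard; omega
      | succ N ih =>
        intro h hh hcard
        by_cases hc : coeff (s g) (h - fk) ≠ 0
        · obtain ⟨n, hn⟩ := hptsupp g hg _ hc
          rw [sub_eq_iff_eq_add] at hn
          exact ⟨n, by rw [hn]; ring⟩
        · push_neg at hc
          have hsum0 : ∑ h' ∈ b.support, b h' * coeff (s h') h = 0 := by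
            rw [← coeffEq, hc]
          have hterm : b h * coeff (s h) h ≠ 0 := by
            rw [hpt h (hbT hh), mul_one]
            exact Finsupp.mem_support_iff.1 hh
          have hex : ∃ h' ∈ b.support, h' ≠ h ∧ b h' * coeff (s h') h ≠ 0 := by
            by_contra hnone
            push_neg at hnone
            have := Finset.sum_eq_single_of_mem h hh
              (fun h' hh' hne => hnone h' hh' hne)
            rw [hsum0] at this
            exact hterm this.symm
          obtain ⟨h', hh', hne, hprod⟩ := hex
          have hcoef : coeff (s h') h ≠ 0 := fun h0 => hprod (by rw [h0, mul_zero])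
          obtain ⟨n, hn⟩ := hptsupp h' (hbT hh') _ hcoef
          have hn0 : n ≠ 0 := by
            intro h0
            rw [h0, myPstarN_zero, add_zero] at hn
            exact hne hn.symm
          -- the "below" set for h' is strictly smaller
          set S : (I → ℤ) → Finset (I → ℤ) :=
            fun x => b.support.filter (fun y => y ≠ x ∧ ∃ n, (x : I → ℤ) = y + pstarN Iuf Bt n)
            with hSdef
          have hsub' : S h' ⊆ S h := by
            intro x hx
            rw [hSdef, Finset.mem_filter] at hx ⊢
            obtain ⟨hxs, hxne, n'', hn''⟩ := hx
            have h2 : (h : I → ℤ) = x + (pstarN Iuf Bt n'' + pstarN Iuf Bt n) := by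
              conv_lhs => rw [hn, hn'']
              exact add_assoc _ _ _
            refine ⟨hxs, ?_, n'' + n, ?_⟩
            · intro hxh
              rw [← hxh] at h2
              have hz : pstarN Iuf Bt (n'' + n) = 0 := by
                rw [myPstarN_add]; exact (left_eq_add.1 h2)
              have hzz : n'' + n = 0 := myPstarN_inj hfull (by rw [hz, myPstarN_zero])
              apply hn0
              funext kk
              have := congrFun hzz kk
              simp only [Pi.add_apply, Pi.zero_apply] at this ⊢
              omega
            · rw [myPstarN_add]; exact h2
          have hmemS : h' ∈ S h := by
            rw [hSdef, Finset.mem_filter]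
            exact ⟨hh', hne, n, hn⟩
          have hnotS : h' ∉ S h' := by
            rw [hSdef, Finset.mem_filter]
            rintro ⟨-, hne', -⟩
            exact hne' rfl
          have hlt : (S h').card < (S h).card :=
            Finset.card_lt_card ((Finset.ssubset_iff_of_subset hsub').2 ⟨h', hmemS, hnotS⟩)
          have hcard2 : (S h).card < N + 1 := hcard
          have hcard3 : (S h').card < N := by omega
          obtain ⟨m, hm⟩ := ih h' hh' hcard3
          refine ⟨m + n, ?_⟩
          rw [myPstarN_add, hn, hm]
          exact add_assoc _ _ _
    intro h hh
    exact main _ h hh (Nat.lt_succ_self _)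
  -- Step B: b (g + fk) = 1
  have hb1 : b (g + fk) = 1 := by
    have h1 : coeff (s g) ((g + fk) - fk) = 1 := by
      rw [add_sub_cancel_right]
      exact hpt g hg
    rw [coeffEq (g + fk)] at h1
    have hsum : ∑ h ∈ b.support, b h * coeff (s h) (g + fk)
        = b (g + fk) * coeff (s (g + fk)) (g + fk) := by
      apply Finset.sum_eq_single
      · intro h' hh' hne
        rcases eq_or_ne (coeff (s h') (g + fk)) 0 with h0 | h0
        · rw [h0, mul_zero]
        · exfalso
          obtain ⟨n, hn⟩ := hptsupp h' (hbT hh') _ h0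
          obtain ⟨m, hm⟩ := stepA h' hh'
          rw [hm] at hn
          have h2 : (g + fk) + 0 = (g + fk) + (pstarN Iuf Bt m + pstarN Iuf Bt n) := by
            rw [add_zero]
            conv_lhs => rw [hn]
            exact add_assoc _ _ _
          have hz : pstarN Iuf Bt (m + n) = 0 := by
            rw [myPstarN_add]; exact (add_left_cancel h2).symm
          have hmn : m + n = 0 := myPstarN_inj hfull (by rw [hz, myPstarN_zero])
          have hm0 : m = 0 := by
            funext kk
            have := congrFun hmn kk
            simp only [Pi.add_apply, Pi.zero_apply] at this ⊢
            omega
          rw [hm0, myPstarN_zero, add_zero] at hm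
          exact hne hm
      · intro ha
        rw [Finsupp.notMem_support_iff.1 ha, zero_mul]
    rw [hsum, hpt _ hgfkT, mul_one] at h1
    exact h1
  -- Step C: k is not in the support of s (g + fk)
  have hbne : b (g + fk) ≠ 0 := by rw [hb1]; exact one_ne_zero
  have hknot' : k ∉ suppz Iuf Bt (g + fk) (s (g + fk)) := by
    intro hmem
    rcases hbsub (g + fk) hbne hmem with h | h
    · exact hksupp h
    · exact hks_fk h
  -- Step D: conclude via the factorization property
  have e1 : frz Iuf Bt {k} g (s g) = s g := myFrz_eq_self (hs g hg).2 hksupp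
  have e2 : frz Iuf Bt {k} (g + fk) (s (g + fk)) = s (g + fk) :=
    myFrz_eq_self (hs _ hgfkT).2 hknot'
  have hf := hfact g hg
  rw [e1, e2] at hf
  exact hf.symm

end CAFreeze
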